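/- Let n, m, l be natural numbers and let A ∈ ℂ^{n×n}, B ∈ ℂ^{n×m}, C ∈ ℂ^{l×n}. If the (n+l)×(n+m) block matrix [[A, B],[C, 0]] has rank ≥ n, then there exists a matrix E ∈ ℂ^{m×n} such that the (n+l)×n vertically stacked matrix [A + B·E; C] has rank n. -/

import Mathlib

open Module Submodule LinearMap

/-- Two proper subspaces cannot cover the whole space. -/
private lemma exists_notMem_two {K V : Type*} [Field K] [AddCommGroup V] [Module K V]
    {P Q : Submodule K V} (hP : P ≠ ⊤) (hQ : Q ≠ ⊤) : ∃ v, v ∉ P ∧ v ∉ Q := by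
  obtain ⟨a, ha⟩ : ∃ a, a ∉ P := by
    by_contra hc; push_neg at hc; exact hP (Submodule.eq_top_iff'.2 hc)
  obtain ⟨b, hb⟩ : ∃ b, b ∉ Q := by
    by_contra hc; push_neg at hc; exact hQ (Submodule.eq_top_iff'.2 hc)
  by_cases haQ : a ∈ Q
  · by_cases hbP : b ∈ P
    · refine ⟨a + b, fun habP => ha ?_, fun habQ => hb ?_⟩
      · simpa using Submodule.sub_mem P habP hbP
      · simpa using Submodule.sub_mem Q habQ haQ
    · exact ⟨b, hbP, hb⟩
  · exact ⟨a, ha, haQ⟩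

/-- There is a `k`-dimensional subspace avoiding two given subspaces of
small enough dimension. -/
private lemma exists_avoid {K V : Type*} [Field K] [AddCommGroup V] [Module K V]
    [FiniteDimensional K V] (U N : Submodule K V) (k : ℕ)
    (hU : finrank K U + k ≤ finrank K V) (hN : finrank K N + k ≤ finrank K V) :
    ∃ S : Submodule K V, finrank K S = k ∧ S ⊓ U = ⊥ ∧ S ⊓ N = ⊥ := by
  induction k with
  | zero => exact ⟨⊥, by simp, bot_inf_eq U, bot_inf_eq N⟩
  | succ k ih =>
    obtain ⟨S, hSk, hSU, hSN⟩ := ih (by omega) (by omega)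
    have hsup : ∀ T : Submodule K V, finrank K T + (k + 1) ≤ finrank K V → S ⊓ T = ⊥ →
        S ⊔ T ≠ ⊤ := by
      intro T hT hST hTop
      have h1 : finrank K ↥(S ⊔ T) + finrank K ↥(S ⊓ T) = finrank K S + finrank K T :=
        Submodule.finrank_sup_add_finrank_inf_eq S T
      rw [hST, hTop] at h1
      rw [finrank_top, finrank_bot] at h1
      omega
    obtain ⟨v, hvU, hvN⟩ := exists_notMem_two (hsup U hU hSU) (hsup N hN hSN)
    have hvS : v ∉ S := fun hv => hvU (Submodule.mem_sup_left hv)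
    have hv0 : v ≠ 0 := fun hv => hvU (by simp [hv])
    have hspan : S ⊓ (K ∙ v) = ⊥ := by
      rw [Submodule.eq_bot_iff]
      rintro w ⟨hwS, hwv⟩
      obtain ⟨c, rfl⟩ := Submodule.mem_span_singleton.mp hwv
      rcases eq_or_ne c 0 with rfl | hc
      · simp
      · exact absurd (by simpa [smul_smul, inv_mul_cancel₀ hc] using S.smul_mem c⁻¹ hwS) hvS
    have key : ∀ T : Submodule K V, v ∉ S ⊔ T → S ⊓ T = ⊥ → (S ⊔ (K ∙ v)) ⊓ T = ⊥ := by
      intro T hvT hST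
      rw [Submodule.eq_bot_iff]
      rintro w ⟨hw1, hw2⟩
      obtain ⟨s, hs, t, ht, rfl⟩ := Submodule.mem_sup.mp hw1
      obtain ⟨c, rfl⟩ := Submodule.mem_span_singleton.mp ht
      rcases eq_or_ne c 0 with rfl | hc
      · have : s ∈ S ⊓ T := ⟨hs, by simpa using hw2⟩
        rw [hST] at this
        simpa using this
      · exfalso
        apply hvT
        have hmem : (s + c • v) - s ∈ S ⊔ T :=
          Submodule.sub_mem _ (Submodule.mem_sup_right hw2) (Submodule.mem_sup_left hs)
        have : c⁻¹ • ((s + c • v) - s) ∈ S ⊔ T := Submodule.smul_mem _ _ hmem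
        simpa [smul_smul, inv_mul_cancel₀ hc] using this
    refine ⟨S ⊔ (K ∙ v), ?_, key U hvU hSU, key N hvN hSN⟩
    have h1 : finrank K ↥(S ⊔ (K ∙ v)) + finrank K ↥(S ⊓ (K ∙ v)) =
        finrank K S + finrank K ↥(K ∙ v) := Submodule.finrank_sup_add_finrank_inf_eq _ _
    rw [hspan, finrank_bot, finrank_span_singleton hv0, hSk] at h1
    omega

/-- if the block matrix [[A,B],[C,0]] has rank ≥ n, then there is E
with the stacked matrix [A + B·E; C] of rank n. -/
theorem exists_E_of_block_rank_ge (n m l : ℕ)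
    (A : Matrix (Fin n) (Fin n) ℂ) (B : Matrix (Fin n) (Fin m) ℂ)
    (C : Matrix (Fin l) (Fin n) ℂ)
    (h : n ≤ (Matrix.fromBlocks A B C 0).rank) :
    ∃ E : Matrix (Fin m) (Fin n) ℂ,
      (Matrix.fromRows (A + B * E) C).rank = n := by
  classical
  set M := Matrix.fromBlocks A B C (0 : Matrix (Fin l) (Fin m) ℂ) with hM
  set f := M.mulVecLin with hf
  have hdim : finrank ℂ (Fin n ⊕ Fin m → ℂ) = n + m := by
    simp [Module.finrank_pi]
  have hrank : (Matrix.fromBlocks A B C (0 : Matrix (Fin l) (Fin m) ℂ)).rank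
      = finrank ℂ (LinearMap.range f) := rfl
  have hker : finrank ℂ (LinearMap.ker f) ≤ m := by
    have h2 := LinearMap.finrank_range_add_finrank_ker f
    rw [hdim] at h2
    rw [hrank] at h
    omega
  -- projections
  set π₁ : (Fin n ⊕ Fin m → ℂ) →ₗ[ℂ] (Fin n → ℂ) := LinearMap.funLeft ℂ ℂ Sum.inl with hπ₁
  set π₂ : (Fin n ⊕ Fin m → ℂ) →ₗ[ℂ] (Fin m → ℂ) := LinearMap.funLeft ℂ ℂ Sum.inr with hπ₂
  have hπ₁surj : Function.Surjective π₁ :=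
    LinearMap.funLeft_surjective_of_injective ℂ ℂ _ Sum.inl_injective
  have hU : finrank ℂ (LinearMap.ker π₁) = m := by
    have h1 := LinearMap.finrank_range_add_finrank_ker π₁
    rw [LinearMap.range_eq_top.2 hπ₁surj, finrank_top, hdim] at h1
    simp only [Module.finrank_pi, Fintype.card_fin] at h1
    omega
  obtain ⟨S, hSn, hSU, hSN⟩ := exists_avoid (LinearMap.ker π₁) (LinearMap.ker f) n
    (by rw [hU, hdim]; omega) (by rw [hdim]; omega)
  -- π₁ restricted to S is a bijection onto ℂ^n
  have hp : Function.Injective (π₁.comp S.subtype) := by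
    rw [← LinearMap.ker_eq_bot, Submodule.eq_bot_iff]
    rintro ⟨w, hwS⟩ hw
    have hwU : w ∈ LinearMap.ker π₁ := by
      rw [LinearMap.mem_ker]
      simpa using hw
    have : w ∈ S ⊓ LinearMap.ker π₁ := ⟨hwS, hwU⟩
    rw [hSU] at this
    exact Subtype.ext (by simpa using this)
  have hdimS : finrank ℂ S = finrank ℂ (Fin n → ℂ) := by
    rw [hSn]; simp
  let e : S ≃ₗ[ℂ] (Fin n → ℂ) := LinearMap.linearEquivOfInjective (π₁.comp S.subtype) hp hdimS
  let g : (Fin n → ℂ) →ₗ[ℂ] (Fin m → ℂ) := π₂ ∘ₗ S.subtype ∘ₗ (e.symm : (Fin n → ℂ) →ₗ[ℂ] S)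
  refine ⟨LinearMap.toMatrix' g, ?_⟩
  set E := LinearMap.toMatrix' g with hE
  have hgE : ∀ x : Fin n → ℂ, E.mulVec x = g x := by
    intro x
    rw [hE, ← Matrix.toLin'_apply, Matrix.toLin'_toMatrix']
  -- key: the graph vector lies in S and projects to x
  have hgraph : ∀ x : Fin n → ℂ, Sum.elim x (g x) ∈ S ∧
      (Sum.elim x (g x) : Fin n ⊕ Fin m → ℂ) = (S.subtype (e.symm x) : Fin n ⊕ Fin m → ℂ) := by
    intro x
    have hback : π₁.comp S.subtype (e.symm x) = x := by
      have := LinearMap.linearEquivOfInjective_apply (f := π₁.comp S.subtype) hp hdimS (e.symm x)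
      calc π₁.comp S.subtype (e.symm x) = e (e.symm x) := this.symm
        _ = x := e.apply_symm_apply x
    have heq : (Sum.elim x (g x) : Fin n ⊕ Fin m → ℂ) = S.subtype (e.symm x) := by
      funext i
      cases i with
      | inl i =>
        have := congrFun hback i
        simpa [π₁, LinearMap.funLeft_apply] using this.symm
      | inr i =>
        simp [g, π₂, LinearMap.funLeft_apply]
    exact ⟨heq ▸ (e.symm x).2, heq⟩
  -- injectivity of the stacked matrix
  have hinj : Function.Injective (Matrix.fromRows (A + B * E) C).mulVecLin := by
    rw [← LinearMap.ker_eq_bot, Submodule.eq_bot_iff]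
    intro x hx
    rw [LinearMap.mem_ker, Matrix.mulVecLin_apply] at hx
    have htop : (A + B * E).mulVec x = 0 := by
      funext i
      have := congrFun hx (Sum.inl i)
      simpa [Matrix.mulVec, Matrix.fromRows_apply_inl, dotProduct] using this
    have hbot : C.mulVec x = 0 := by
      funext i
      have := congrFun hx (Sum.inr i)
      simpa [Matrix.mulVec, Matrix.fromRows_apply_inr, dotProduct] using this
    set w : Fin n ⊕ Fin m → ℂ := Sum.elim x (g x) with hw
    have hwS : w ∈ S := (hgraph x).1
    have hwker : w ∈ LinearMap.ker f := by
      rw [LinearMap.mem_ker, hf, Matrix.mulVecLin_apply, hM, Matrix.fromBlocks_mulVec]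
      have hwl : w ∘ Sum.inl = x := rfl
      have hwr : w ∘ Sum.inr = E.mulVec x := by
        rw [hgE]; rfl
      rw [hwl, hwr]
      have h1 : A.mulVec x + B.mulVec (E.mulVec x) = (A + B * E).mulVec x := by
        rw [Matrix.add_mulVec, Matrix.mulVec_mulVec]
      rw [h1, htop]
      funext i
      cases i <;> simp [hbot]
    have : w ∈ S ⊓ LinearMap.ker f := ⟨hwS, hwker⟩
    rw [hSN] at this
    have hw0 : w = 0 := by simpa using this
    funext i
    exact congrFun hw0 (Sum.inl i)
  have : (Matrix.fromRows (A + B * E) C).rank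
      = finrank ℂ (LinearMap.range (Matrix.fromRows (A + B * E) C).mulVecLin) := rfl
  rw [this, LinearMap.finrank_range_of_inj hinj]
  simp
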